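/- Let q* > 1 and define F : ℝ → ℝ by F(p) = h_{q*}^{-1}(h_{q*}(p) + p) − p, where h_{q*}(p) = p + |p|^{q*−1}·sgn(p). If 1 < q* ≤ 3, then F is monotonically increasing on ℝ. -/

import Mathlib

open Real Function Set Filter

namespace Stmt16Aux

/-- The odd power map `p ↦ |p|^a sgn p`. -/
noncomputable def phi (a p : ℝ) : ℝ := |p| ^ a * Real.sign p

/-- `h_{q*}` with `a = q* - 1`. -/
noncomputable def hh (a p : ℝ) : ℝ := p + phi a p

lemma phi_of_pos {a p : ℝ} (hp : 0 < p) : phi a p = p ^ a := by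
  simp [phi, abs_of_pos hp, Real.sign_of_pos hp]

lemma phi_zero (a : ℝ) : phi a 0 = 0 := by simp [phi, Real.sign_zero]

lemma phi_neg (a p : ℝ) : phi a (-p) = - phi a p := by
  simp [phi, Real.sign_neg, abs_neg, mul_neg]

lemma phi_nonneg {a p : ℝ} (hp : 0 ≤ p) : 0 ≤ phi a p := by
  rcases eq_or_lt_of_le hp with rfl | hp
  · simp [phi_zero]
  · rw [phi_of_pos hp]; positivity

lemma phi_mono {a : ℝ} (ha : 0 < a) : Monotone (phi a) := by
  have key : ∀ x y : ℝ, 0 ≤ x → x ≤ y → phi a x ≤ phi a y := by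
    intro x y hx hxy
    rcases eq_or_lt_of_le hx with rfl | hx
    · rw [phi_zero]; exact phi_nonneg (by linarith)
    · rw [phi_of_pos hx, phi_of_pos (by linarith)]
      exact Real.rpow_le_rpow hx.le hxy ha.le
  intro x y hxy
  rcases le_total 0 x with hx | hx
  · exact key x y hx hxy
  · rcases le_total 0 y with hy | hy
    · calc phi a x = -phi a (-x) := by rw [phi_neg]; ring
        _ ≤ 0 := by simpa using phi_nonneg (a := a) (by linarith : (0:ℝ) ≤ -x)
        _ ≤ phi a y := phi_nonneg hy
    · have := key (-y) (-x) (by linarith) (by linarith)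
      rw [phi_neg, phi_neg] at this
      linarith

lemma phi_cont {a : ℝ} (ha : 0 < a) : Continuous (phi a) := by
  rw [continuous_iff_continuousAt]
  intro x
  rcases lt_trichotomy x 0 with hx | rfl | hx
  · have hev : (fun y : ℝ => -((-y) ^ a)) =ᶠ[nhds x] phi a := by
      filter_upwards [Iio_mem_nhds hx] with y hy
      rw [phi, abs_of_neg hy, Real.sign_of_neg hy]
      ring
    refine ContinuousAt.congr ?_ hev
    have h1 : ContinuousAt (fun t : ℝ => t ^ a) (-x) :=
      Real.continuousAt_rpow_const _ _ (Or.inl (by linarith))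
    exact (h1.comp (continuousAt_neg)).neg
  · -- at 0 : squeeze
    have h0 : phi a 0 = 0 := phi_zero a
    rw [ContinuousAt, h0]
    have habs : Tendsto (fun y : ℝ => |y| ^ a) (nhds 0) (nhds 0) := by
      have h1 : ContinuousAt (fun t : ℝ => t ^ a) (|(0:ℝ)|) := by
        rw [abs_zero]; exact Real.continuousAt_rpow_const _ _ (Or.inr ha.le)
      have h2 := h1.comp (continuous_abs.continuousAt (x := (0:ℝ)))
      have h3 : ((fun t : ℝ => t ^ a) ∘ abs) 0 = 0 := by
        simp [Function.comp, Real.zero_rpow ha.ne']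
      rw [ContinuousAt, h3] at h2
      exact h2
    refine squeeze_zero_norm (fun y => ?_) habs
    rw [Real.norm_eq_abs, phi, abs_mul, abs_rpow_of_nonneg (abs_nonneg y)]
    rcases lt_trichotomy y 0 with hy | rfl | hy
    · simp [Real.sign_of_neg hy, abs_abs]
    · simp [Real.sign_zero, Real.zero_rpow ha.ne']
    · simp [Real.sign_of_pos hy, abs_abs]
  · have hev : (fun y : ℝ => y ^ a) =ᶠ[nhds x] phi a := by
      filter_upwards [Ioi_mem_nhds hx] with y hy
      rw [phi_of_pos hy]
    refine ContinuousAt.congr ?_ hev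
    exact Real.continuousAt_rpow_const _ _ (Or.inl (by linarith))

lemma phi_hasDerivAt {a : ℝ} (ha : 0 < a) {p : ℝ} (hp : p ≠ 0) :
    HasDerivAt (phi a) (a * |p| ^ (a - 1)) p := by
  rcases hp.lt_or_gt with hp | hp
  · have h1 : HasDerivAt (fun t : ℝ => t ^ a) (a * (-p) ^ (a - 1)) (-p) :=
      Real.hasDerivAt_rpow_const (Or.inl (by linarith))
    have h2 : HasDerivAt (fun y : ℝ => (-y) ^ a) (a * (-p) ^ (a - 1) * (-1)) p :=
      h1.comp p (hasDerivAt_neg p)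
    have h3 := h2.fun_neg
    have h4 : HasDerivAt (fun y : ℝ => -((-y) ^ a)) (a * |p| ^ (a - 1)) p := by
      refine h3.congr_deriv ?_
      rw [abs_of_neg hp]; ring
    refine h4.congr_of_eventuallyEq ?_
    filter_upwards [Iio_mem_nhds hp] with y hy
    rw [phi, abs_of_neg hy, Real.sign_of_neg hy]; ring
  · have h1 : HasDerivAt (fun t : ℝ => t ^ a) (a * p ^ (a - 1)) p :=
      Real.hasDerivAt_rpow_const (Or.inl (by linarith))
    have h4 : HasDerivAt (fun t : ℝ => t ^ a) (a * |p| ^ (a - 1)) p := by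
      rwa [abs_of_pos hp]
    refine h4.congr_of_eventuallyEq ?_
    filter_upwards [Ioi_mem_nhds hp] with y hy
    rw [phi_of_pos hy]

lemma hh_strictMono {a : ℝ} (ha : 0 < a) : StrictMono (hh a) := by
  intro x y hxy
  have := phi_mono ha hxy.le
  simp only [hh]
  linarith

lemma hh_cont {a : ℝ} (ha : 0 < a) : Continuous (hh a) :=
  continuous_id.add (phi_cont ha)

lemma hh_zero (a : ℝ) : hh a 0 = 0 := by simp [hh, phi_zero]

lemma hh_neg (a p : ℝ) : hh a (-p) = - hh a p := by
  simp [hh, phi_neg]; ring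

lemma hh_surj {a : ℝ} (ha : 0 < a) : Surjective (hh a) := by
  intro y
  rcases le_total 0 y with hy | hy
  · have h1 : y ≤ hh a y := by
      have := phi_nonneg (a := a) hy; simp only [hh]; linarith
    have hmem : y ∈ Icc (hh a 0) (hh a y) := by rw [hh_zero]; exact ⟨hy, h1⟩
    obtain ⟨x, _, hx⟩ := intermediate_value_Icc hy ((hh_cont ha).continuousOn) hmem
    exact ⟨x, hx⟩
  · have h1 : hh a y ≤ y := by
      have h2 := phi_mono ha hy
      rw [phi_zero] at h2
      simp only [hh]; linarith
    have hmem : y ∈ Icc (hh a y) (hh a 0) := by rw [hh_zero]; exact ⟨h1, hy⟩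
    obtain ⟨x, _, hx⟩ := intermediate_value_Icc hy ((hh_cont ha).continuousOn) hmem
    exact ⟨x, hx⟩

lemma hh_hasDerivAt {a : ℝ} (ha : 0 < a) {p : ℝ} (hp : p ≠ 0) :
    HasDerivAt (hh a) (1 + a * |p| ^ (a - 1)) p :=
  (hasDerivAt_id p).add (phi_hasDerivAt ha hp)

/-- Key inequality, positive case. -/
lemma key_pos {a : ℝ} (ha : 0 < a) (ha2 : a ≤ 2) {p u : ℝ} (hp : 0 < p)
    (hu : hh a u = hh a p + p) :
    a * |u| ^ (a - 1) ≤ 1 + a * |p| ^ (a - 1) := by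
  have hup : p < u := by
    have h1 : hh a p < hh a u := by rw [hu]; linarith
    exact (hh_strictMono ha).lt_iff_lt.mp h1
  have hu0 : 0 < u := hp.trans hup
  rw [abs_of_pos hp, abs_of_pos hu0]
  rcases le_or_gt a 1 with h1 | h1
  · -- a ≤ 1 : the exponent a - 1 is nonpositive, rpow is antitone
    have h2 : u ^ (a - 1) ≤ p ^ (a - 1) :=
      Real.rpow_le_rpow_of_nonpos hp hup.le (by linarith)
    have h3 : 0 ≤ p ^ (a - 1) := (Real.rpow_pos_of_pos hp _).le
    nlinarith
  · -- 1 < a ≤ 2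
    set s := u - p with hs_def
    have hs0 : 0 ≤ s := by linarith
    have heq : u + u ^ a = 2 * p + p ^ a := by
      have h2 : hh a u = u + u ^ a := by rw [hh, phi_of_pos hu0]
      have h3 : hh a p = p + p ^ a := by rw [hh, phi_of_pos hp]
      rw [h2, h3] at hu; linarith
    -- auxiliary powers
    have hPa : (0:ℝ) < p ^ a := Real.rpow_pos_of_pos hp a
    have hP : (0:ℝ) < p ^ (a - 1) := Real.rpow_pos_of_pos hp _
    have hQ : (0:ℝ) < p ^ (a - 2) := Real.rpow_pos_of_pos hp _
    have hU : (0:ℝ) < u ^ (a - 1) := Real.rpow_pos_of_pos hu0 _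
    have hPm : p ^ (a - 1) * p = p ^ a := by
      rw [← Real.rpow_add_one hp.ne' (a - 1)]; norm_num
    have hQm : p ^ (a - 2) * p = p ^ (a - 1) := by
      rw [← Real.rpow_add_one hp.ne' (a - 2)]; congr 1; ring
    have hspn : (-1:ℝ) ≤ s / p := by
      have : (0:ℝ) ≤ s / p := by positivity
      linarith
    have h1sp : 1 + s / p = u / p := by
      rw [hs_def]; field_simp; ring
    -- Bernoulli, lower (convexity, exponent a ≥ 1)
    have hBa : 1 + a * (s / p) ≤ (1 + s / p) ^ a :=
      one_add_mul_self_le_rpow_one_add hspn h1.le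
    rw [h1sp, Real.div_rpow hu0.le hp.le] at hBa
    have hii : p ^ a + a * s * p ^ (a - 1) ≤ u ^ a := by
      have h2 : (1 + a * (s / p)) * p ^ a ≤ u ^ a := by
        rw [← le_div_iff₀ hPa]; exact hBa
      have h3 : (1 + a * (s / p)) * p ^ a = p ^ a + a * s * p ^ (a - 1) := by
        rw [← hPm]; field_simp
      rw [h3] at h2; exact h2
    -- Bernoulli, upper (concavity, exponent a - 1 ≤ 1)
    have hBb : (1 + s / p) ^ (a - 1) ≤ 1 + (a - 1) * (s / p) :=
      rpow_one_add_le_one_add_mul_self hspn (by linarith) (by linarith)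
    rw [h1sp, Real.div_rpow hu0.le hp.le] at hBb
    have hiv : u ^ (a - 1) ≤ p ^ (a - 1) + (a - 1) * s * p ^ (a - 2) := by
      have h2 : u ^ (a - 1) ≤ (1 + (a - 1) * (s / p)) * p ^ (a - 1) := by
        rw [← div_le_iff₀ hP]; exact hBb
      have h3 : (1 + (a - 1) * (s / p)) * p ^ (a - 1)
          = p ^ (a - 1) + (a - 1) * s * p ^ (a - 2) := by
        rw [← hQm]; field_simp
      rw [h3] at h2; exact h2
    -- from the constraint : u^a - p^a = p - s
    have hcon : u ^ a - p ^ a = p - s := by rw [hs_def]; linarith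
    -- hence s (1 + a p^(a-1)) ≤ p
    have h5 : s * (1 + a * p ^ (a - 1)) ≤ p := by nlinarith
    -- multiply by a (a-1) p^(a-2) ≥ 0
    have h6 : a * (a - 1) * p ^ (a - 2) * s * (1 + a * p ^ (a - 1))
        ≤ a * (a - 1) * p ^ (a - 1) := by
      have hc : (0:ℝ) ≤ a * (a - 1) * p ^ (a - 2) :=
        mul_nonneg (mul_nonneg ha.le (by linarith)) hQ.le
      calc a * (a - 1) * p ^ (a - 2) * s * (1 + a * p ^ (a - 1))
          = a * (a - 1) * p ^ (a - 2) * (s * (1 + a * p ^ (a - 1))) := by ring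
        _ ≤ a * (a - 1) * p ^ (a - 2) * p := mul_le_mul_of_nonneg_left h5 hc
        _ = a * (a - 1) * p ^ (a - 1) := by rw [mul_assoc, hQm]
    have h7 : a * (a - 1) * p ^ (a - 2) * s ≤ a - 1 := by
      have hpos : (0:ℝ) < 1 + a * p ^ (a - 1) := by positivity
      have h8 : a * (a - 1) * p ^ (a - 1) ≤ (a - 1) * (1 + a * p ^ (a - 1)) := by
        nlinarith
      have h9 : a * (a - 1) * p ^ (a - 2) * s * (1 + a * p ^ (a - 1))
          ≤ (a - 1) * (1 + a * p ^ (a - 1)) := le_trans h6 h8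
      exact le_of_mul_le_mul_right (by linarith [h9]) hpos
    nlinarith [mul_le_mul_of_nonneg_left hiv ha.le]

lemma key {a : ℝ} (ha : 0 < a) (ha2 : a ≤ 2) {p u : ℝ} (hp : p ≠ 0)
    (hu : hh a u = hh a p + p) :
    a * |u| ^ (a - 1) ≤ 1 + a * |p| ^ (a - 1) := by
  rcases hp.lt_or_gt with h | h
  · have h2 : hh a (-u) = hh a (-p) + (-p) := by
      rw [hh_neg, hh_neg, hu]; ring
    have h3 := key_pos ha ha2 (by linarith : (0:ℝ) < -p) h2
    simpa [abs_neg] using h3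
  · exact key_pos ha ha2 h hu

end Stmt16Aux

open Stmt16Aux in
/-- For `1 < q* ≤ 3`, the map `F p = h_{q*}⁻¹(h_{q*}(p) + p) - p`, with
`h_{q*}(p) = p + |p|^{q*-1} sgn p`, is monotonically increasing on `ℝ`. -/
theorem stmt_16 (qs : ℝ) (hqs1 : 1 < qs) (hqs3 : qs ≤ 3) :
    letI h := fun p : ℝ => p + |p| ^ (qs - 1) * Real.sign p
    Monotone (fun p : ℝ => Function.invFun h (h p + p) - p) := by
  show Monotone (fun p : ℝ => Function.invFun (hh (qs - 1)) (hh (qs - 1) p + p) - p)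
  set a := qs - 1 with ha_def
  have ha : (0:ℝ) < a := by rw [ha_def]; linarith
  have ha2 : a ≤ 2 := by rw [ha_def]; linarith
  have hsm := hh_strictMono ha
  have hinj := hsm.injective
  have hsurj := hh_surj ha
  set g := Function.invFun (hh a) with hg_def
  have hgh : ∀ y, hh a (g y) = y := fun y => Function.invFun_eq (hsurj y)
  have hhg : ∀ x, g (hh a x) = x := fun x => Function.leftInverse_invFun hinj x
  -- continuity of the inverse, via the order isomorphism
  let e : ℝ ≃o ℝ := StrictMono.orderIsoOfSurjective _ hsm hsurj
  have hge : g = (e.symm : ℝ → ℝ) := by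
    funext y
    apply hinj
    rw [hgh]
    exact (e.apply_symm_apply y).symm
  have hgcont : Continuous g := by rw [hge]; exact OrderIso.continuous _
  have hFc : Continuous (fun p : ℝ => g (hh a p + p) - p) :=
    (hgcont.comp ((hh_cont ha).add continuous_id)).sub continuous_id
  -- derivative at nonzero points
  have hderiv : ∀ p : ℝ, p ≠ 0 →
      ∃ d : ℝ, 0 ≤ d ∧ HasDerivAt (fun p : ℝ => g (hh a p + p) - p) d p := by
    intro p hp
    have hw0 : hh a p + p ≠ 0 := by
      rcases hp.lt_or_gt with h | h
      · have h2 : hh a p < hh a 0 := hsm h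
        rw [hh_zero] at h2
        intro hcon; nlinarith
      · have h2 : hh a 0 < hh a p := hsm h
        rw [hh_zero] at h2
        intro hcon; nlinarith
    have hu0 : g (hh a p + p) ≠ 0 := by
      intro hcon
      have h2 := hgh (hh a p + p)
      rw [hcon, hh_zero] at h2
      exact hw0 h2.symm
    have hD : HasDerivAt (hh a) (1 + a * |g (hh a p + p)| ^ (a - 1)) (g (hh a p + p)) :=
      hh_hasDerivAt ha hu0
    have hDpos : (0:ℝ) < 1 + a * |g (hh a p + p)| ^ (a - 1) := by
      have h2 : (0:ℝ) ≤ a * |g (hh a p + p)| ^ (a - 1) :=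
        mul_nonneg ha.le (Real.rpow_nonneg (abs_nonneg _) _)
      linarith
    have hg' : HasDerivAt g (1 + a * |g (hh a p + p)| ^ (a - 1))⁻¹ (hh a p + p) :=
      HasDerivAt.of_local_left_inverse hgcont.continuousAt hD hDpos.ne'
        (Filter.Eventually.of_forall hgh)
    have hinner : HasDerivAt (fun p : ℝ => hh a p + p) (1 + a * |p| ^ (a - 1) + 1) p :=
      (hh_hasDerivAt ha hp).add (hasDerivAt_id p)
    have hF : HasDerivAt (fun p : ℝ => g (hh a p + p) - p)
        ((1 + a * |g (hh a p + p)| ^ (a - 1))⁻¹ * (1 + a * |p| ^ (a - 1) + 1) - 1) p :=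
      ((HasDerivAt.comp (h := fun q : ℝ => hh a q + q) p hg' hinner).sub (hasDerivAt_id p))
    refine ⟨_, ?_, hF⟩
    have hk : hh a (g (hh a p + p)) = hh a p + p := hgh _
    have hkey := key ha ha2 hp hk
    have h2 : (1:ℝ) + a * |g (hh a p + p)| ^ (a - 1) ≤ 1 + a * |p| ^ (a - 1) + 1 := by
      linarith
    have h3 := mul_le_mul_of_nonneg_left h2 (inv_nonneg.mpr hDpos.le)
    rw [inv_mul_cancel₀ hDpos.ne'] at h3
    linarith
  -- glue monotonicity on the two half-lines
  have hmono : ∀ s : Set ℝ, Convex ℝ s → (∀ x ∈ interior s, x ≠ (0:ℝ)) →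
      MonotoneOn (fun p : ℝ => g (hh a p + p) - p) s := by
    intro s hs hs0
    apply monotoneOn_of_deriv_nonneg hs hFc.continuousOn
    · intro x hx
      obtain ⟨d, _, hd⟩ := hderiv x (hs0 x hx)
      exact hd.differentiableAt.differentiableWithinAt
    · intro x hx
      obtain ⟨d, hd0, hd⟩ := hderiv x (hs0 x hx)
      rw [hd.deriv]; exact hd0
  have hm1 : MonotoneOn (fun p : ℝ => g (hh a p + p) - p) (Ici 0) :=
    hmono _ (convex_Ici 0) (by rw [interior_Ici]; exact fun x hx => ne_of_gt hx)
  have hm2 : MonotoneOn (fun p : ℝ => g (hh a p + p) - p) (Iic 0) :=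
    hmono _ (convex_Iic 0) (by rw [interior_Iic]; exact fun x hx => ne_of_lt hx)
  intro x y hxy
  rcases le_total 0 x with hx | hx
  · exact hm1 hx (hx.trans hxy) hxy
  · rcases le_total y 0 with hy | hy
    · exact hm2 hx hy hxy
    · exact le_trans (hm2 hx Set.self_mem_Iic hx) (hm1 Set.self_mem_Ici hy hy)
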